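/- arXiv:1905.08151 — 2 statements merged into one kernel-verified Lean document; each statement's English description precedes it below -/
import Mathlib

section
/- Let d ≥ 2 be an integer, L ∈ ℕ, u ∈ H_{d,L}, and N ∈ ℕ₀. Then ‖u‖_{L^1(I_L^{d−1} × {N})} ≤ ‖u‖_{L^1(I_L^{d−1} × {0})} and ‖u‖_{L^∞(I_L^{d−1} × {N})} ≤ ‖u‖_{L^∞(I_L^{d−1} × {0})}; i.e. discrete harmonic extension to the half space is a contraction from the bottom layer to any higher layer in both L^1 and L^∞. -/
/-!
`L^1` and `L^∞` contraction from the bottom layer to any higher layer for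
bounded periodic discrete harmonic functions on the half space `ℤ^{d-1} × ℕ₀`
(spatial points modelled as `Fin (d-1) → ℤ`).
-/

/-- The cube `I_L^m = {-L+1,…,L}^m` of lattice points. -/
noncomputable def ILpi (m L : ℕ) : Finset (Fin m → ℤ) :=
  Finset.Icc (fun _ => -(L:ℤ) + 1) (fun _ => (L:ℤ))

/-- `u` belongs to `H_{d,L,≥0}`: bounded, `2L`-periodic in the first `d-1`
coordinates, and discrete harmonic at every point of `ℤ^{d-1} × ℕ`. -/
def HalfHarm (d L : ℕ) (u : (Fin (d-1) → ℤ) → ℕ → ℝ) : Prop :=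
  (∃ B : ℝ, ∀ x y, |u x y| ≤ B) ∧
  (∀ x y i, u (x + (2*L) • Pi.single i 1) y = u x y) ∧
  (∀ x y, (∑ i, (u (x + Pi.single i 1) (y+1) + u (x - Pi.single i 1) (y+1)))
      + u x (y+2) + u x y = 2 * d * u x (y+1))

namespace HalfHarmAux

lemma mem_ILpi {m L : ℕ} {x : Fin m → ℤ} :
    x ∈ ILpi m L ↔ ∀ j, -(L:ℤ) + 1 ≤ x j ∧ x j ≤ L := by
  simp only [ILpi, Finset.mem_Icc, Pi.le_def]
  constructor
  · rintro ⟨h1, h2⟩ j; exact ⟨h1 j, h2 j⟩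
  · intro h; exact ⟨fun j => (h j).1, fun j => (h j).2⟩

lemma ILpi_nonempty {m L : ℕ} (hL : 1 ≤ L) : (ILpi m L).Nonempty := by
  refine ⟨fun _ => (L:ℤ), ?_⟩
  rw [mem_ILpi]
  intro j
  constructor
  · have : (1:ℤ) ≤ L := by exact_mod_cast hL
    linarith
  · exact le_rfl

/-- wrap-around successor in coordinate `i` -/
def wrapS {m : ℕ} (L : ℕ) (i : Fin m) (x : Fin m → ℤ) : Fin m → ℤ :=
  Function.update x i (if x i = L then -(L:ℤ) + 1 else x i + 1)

/-- wrap-around predecessor in coordinate `i` -/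
def wrapP {m : ℕ} (L : ℕ) (i : Fin m) (x : Fin m → ℤ) : Fin m → ℤ :=
  Function.update x i (if x i = -(L:ℤ) + 1 then (L:ℤ) else x i - 1)

section Core

variable {m L : ℕ} {u : (Fin m → ℤ) → ℕ → ℝ}

lemma wrapS_mem (hL : 1 ≤ L) {i : Fin m} {x : Fin m → ℤ} (hx : x ∈ ILpi m L) :
    wrapS L i x ∈ ILpi m L := by
  rw [mem_ILpi] at hx ⊢
  intro j
  rcases eq_or_ne j i with rfl | hji
  · simp only [wrapS, Function.update_self]
    have hdL : (1:ℤ) ≤ L := by exact_mod_cast hL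
    by_cases h : x j = L
    · simp [h]; linarith
    · simp only [h, if_false]
      have h1 := (hx j).1; have h2 := (hx j).2
      exact ⟨by linarith, by omega⟩
  · simpa only [wrapS, Function.update_of_ne hji] using hx j

lemma wrapP_mem (hL : 1 ≤ L) {i : Fin m} {x : Fin m → ℤ} (hx : x ∈ ILpi m L) :
    wrapP L i x ∈ ILpi m L := by
  rw [mem_ILpi] at hx ⊢
  intro j
  rcases eq_or_ne j i with rfl | hji
  · simp only [wrapP, Function.update_self]
    have hdL : (1:ℤ) ≤ L := by exact_mod_cast hL
    by_cases h : x j = -(L:ℤ) + 1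
    · simp [h]; linarith
    · simp only [h, if_false]
      have h1 := (hx j).1; have h2 := (hx j).2
      exact ⟨by omega, by linarith⟩
  · simpa only [wrapP, Function.update_of_ne hji] using hx j

lemma wrapP_wrapS (hL : 1 ≤ L) {i : Fin m} {x : Fin m → ℤ} (hx : x ∈ ILpi m L) :
    wrapP L i (wrapS L i x) = x := by
  rw [mem_ILpi] at hx
  have h1 := (hx i).1; have h2 := (hx i).2
  have hdL : (1:ℤ) ≤ L := by exact_mod_cast hL
  funext j
  rcases eq_or_ne j i with rfl | hji
  · simp only [wrapP, wrapS, Function.update_self]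
    by_cases h : x j = L
    · simp [h]
    · have hne : x j + 1 ≠ -(L:ℤ) + 1 := by omega
      simp [h, hne]
  · simp only [wrapP, wrapS, Function.update_of_ne hji]

lemma wrapS_wrapP (hL : 1 ≤ L) {i : Fin m} {x : Fin m → ℤ} (hx : x ∈ ILpi m L) :
    wrapS L i (wrapP L i x) = x := by
  rw [mem_ILpi] at hx
  have h1 := (hx i).1; have h2 := (hx i).2
  have hdL : (1:ℤ) ≤ L := by exact_mod_cast hL
  funext j
  rcases eq_or_ne j i with rfl | hji
  · simp only [wrapS, wrapP, Function.update_self]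
    by_cases h : x j = -(L:ℤ) + 1
    · simp [h]
    · have hne : x j - 1 ≠ (L:ℤ) := by omega
      simp [h, hne]
  · simp only [wrapS, wrapP, Function.update_of_ne hji]

variable (hp : ∀ x y i, u (x + (2*L) • Pi.single i 1) y = u x y)

include hp

lemma hp' : ∀ (x : Fin m → ℤ) (y : ℕ) (i : Fin m),
    u (x - (2*L) • Pi.single i 1) y = u x y := by
  intro x y i
  conv_rhs => rw [show x = (x - (2*L) • Pi.single i 1) + (2*L) • Pi.single i 1 by
    abel]
  rw [hp]

/-- value after shifting by `+e_i` equals value at the wrapped point -/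
lemma val_wrapS {i : Fin m} {x : Fin m → ℤ} (hx : x ∈ ILpi m L) (y : ℕ) :
    u (x + Pi.single i 1) y = u (wrapS L i x) y := by
  by_cases h : x i = L
  · have hxe : x + Pi.single i 1 = wrapS L i x + (2*L) • Pi.single i 1 := by
      funext j
      rcases eq_or_ne j i with rfl | hji
      · simp [wrapS, h, Pi.single_eq_same]
        push_cast
        ring
      · simp [wrapS, Function.update_of_ne hji, Pi.single_eq_of_ne hji]
    rw [hxe, hp]
  · have hxe : x + Pi.single i 1 = wrapS L i x := by
      funext j
      rcases eq_or_ne j i with rfl | hji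
      · simp [wrapS, h, Pi.single_eq_same]
      · simp [wrapS, Function.update_of_ne hji, Pi.single_eq_of_ne hji]
    rw [hxe]

/-- value after shifting by `-e_i` equals value at the wrapped point -/
lemma val_wrapP {i : Fin m} {x : Fin m → ℤ} (hx : x ∈ ILpi m L) (y : ℕ) :
    u (x - Pi.single i 1) y = u (wrapP L i x) y := by
  by_cases h : x i = -(L:ℤ) + 1
  · have hxe : x - Pi.single i 1 = wrapP L i x - (2*L) • Pi.single i 1 := by
      funext j
      rcases eq_or_ne j i with rfl | hji
      · simp [wrapP, h, Pi.single_eq_same]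
        push_cast
        ring
      · simp [wrapP, Function.update_of_ne hji, Pi.single_eq_of_ne hji]
    rw [hxe, hp' hp]
  · have hxe : x - Pi.single i 1 = wrapP L i x := by
      funext j
      rcases eq_or_ne j i with rfl | hji
      · simp [wrapP, h, Pi.single_eq_same]
      · simp [wrapP, Function.update_of_ne hji, Pi.single_eq_of_ne hji]
    rw [hxe]

/-- sums over the cube are invariant under the `+e_i` shift -/
lemma sum_shiftS (hL : 1 ≤ L) (i : Fin m) (y : ℕ) :
    ∑ x ∈ ILpi m L, |u (x + Pi.single i 1) y| = ∑ x ∈ ILpi m L, |u x y| := by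
  refine Finset.sum_nbij' (wrapS L i) (wrapP L i)
    (fun a ha => wrapS_mem hL ha) (fun a ha => wrapP_mem hL ha)
    (fun a ha => wrapP_wrapS hL ha) (fun a ha => wrapS_wrapP hL ha) ?_
  intro a ha
  rw [val_wrapS hp ha]

lemma sum_shiftP (hL : 1 ≤ L) (i : Fin m) (y : ℕ) :
    ∑ x ∈ ILpi m L, |u (x - Pi.single i 1) y| = ∑ x ∈ ILpi m L, |u x y| := by
  refine Finset.sum_nbij' (wrapP L i) (wrapS L i)
    (fun a ha => wrapP_mem hL ha) (fun a ha => wrapS_mem hL ha)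
    (fun a ha => wrapS_wrapP hL ha) (fun a ha => wrapP_wrapS hL ha) ?_
  intro a ha
  rw [val_wrapP hp ha]

end Core

/-- a bounded convex sequence is nonincreasing -/
lemma convex_bdd (a : ℕ → ℝ) (C : ℝ) (hb : ∀ n, a n ≤ C)
    (hc : ∀ n, 2 * a (n+1) ≤ a (n+2) + a n) (N : ℕ) : a N ≤ a 0 := by
  have hdm : Monotone (fun n => a (n+1) - a n) := by
    apply monotone_nat_of_le_succ
    intro n
    have := hc n
    show a (n+1) - a n ≤ a (n+1+1) - a (n+1)
    linarith
  have hstep : ∀ n, a (n+1) ≤ a n := by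
    by_contra hcon
    push_neg at hcon
    obtain ⟨n, hn⟩ := hcon
    set ε := a (n+1) - a n with hε
    have hεpos : 0 < ε := sub_pos.mpr hn
    have key : ∀ k : ℕ, a (n+1) + k * ε ≤ a (n+1+k) := by
      intro k
      induction k with
      | zero => simp
      | succ k ih =>
        have hmk : ε ≤ a (n+1+k+1) - a (n+1+k) := hdm (by omega : n ≤ n+1+k)
        have : n + 1 + (k+1) = n + 1 + k + 1 := by ring
        rw [this]
        push_cast
        linarith
    obtain ⟨k, hk⟩ := exists_nat_gt ((C - a (n+1)) / ε)
    have h2 : (C - a (n+1)) < k * ε := by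
      rw [div_lt_iff₀ hεpos] at hk
      linarith
    have := key k
    have := hb (n+1+k)
    linarith
  induction N with
  | zero => exact le_rfl
  | succ n ih => exact (hstep n).trans ih

end HalfHarmAux

open HalfHarmAux in
/-- Discrete harmonic extension to the half space contracts the `L^1` norm and
the `L^∞` norm from the bottom layer to any layer `N`. -/
theorem halfspace_L1_Linfty_contraction
    (d L : ℕ) (hd : 2 ≤ d) (hL : 1 ≤ L)
    (u : (Fin (d-1) → ℤ) → ℕ → ℝ) (hu : HalfHarm d L u) (N : ℕ) :
    (∑ x ∈ ILpi (d-1) L, |u x N|) ≤ (∑ x ∈ ILpi (d-1) L, |u x 0|) ∧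
    (⨆ x ∈ ILpi (d-1) L, |u x N|) ≤ (⨆ x ∈ ILpi (d-1) L, |u x 0|) := by
  obtain ⟨⟨B, hB⟩, hp, hh⟩ := hu
  have hdm : (d:ℝ) = ((d-1:ℕ):ℝ) + 1 := by
    push_cast [Nat.cast_sub (by omega : 1 ≤ d)]
    ring
  have hne : (ILpi (d-1) L).Nonempty := ILpi_nonempty hL
  set s : Finset (Fin (d-1) → ℤ) := ILpi (d-1) L with hs
  -- pointwise convexity estimate
  have hptw : ∀ (x : Fin (d-1) → ℤ) (y : ℕ),
      2 * (d:ℝ) * |u x (y+1)| ≤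
        (∑ i, (|u (x + Pi.single i 1) (y+1)| + |u (x - Pi.single i 1) (y+1)|))
          + |u x (y+2)| + |u x y| := by
    intro x y
    have h1 : 2 * (d:ℝ) * |u x (y+1)| = |2 * (d:ℝ) * u x (y+1)| := by
      rw [abs_mul, abs_of_nonneg (by positivity : (0:ℝ) ≤ 2 * (d:ℝ))]
    rw [h1, ← hh x y]
    calc |(∑ i, (u (x + Pi.single i 1) (y+1) + u (x - Pi.single i 1) (y+1)))
          + u x (y+2) + u x y|
        ≤ |(∑ i, (u (x + Pi.single i 1) (y+1) + u (x - Pi.single i 1) (y+1)))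
          + u x (y+2)| + |u x y| := abs_add_le _ _
      _ ≤ |∑ i, (u (x + Pi.single i 1) (y+1) + u (x - Pi.single i 1) (y+1))|
          + |u x (y+2)| + |u x y| := by
            have := abs_add_le (∑ i, (u (x + Pi.single i 1) (y+1) +
              u (x - Pi.single i 1) (y+1))) (u x (y+2))
            linarith
      _ ≤ (∑ i, |u (x + Pi.single i 1) (y+1) + u (x - Pi.single i 1) (y+1)|)
          + |u x (y+2)| + |u x y| := by
            have := Finset.abs_sum_le_sum_abs
              (fun i => u (x + Pi.single i 1) (y+1) + u (x - Pi.single i 1) (y+1))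
              (Finset.univ : Finset (Fin (d-1)))
            linarith
      _ ≤ (∑ i, (|u (x + Pi.single i 1) (y+1)| + |u (x - Pi.single i 1) (y+1)|))
          + |u x (y+2)| + |u x y| := by
            gcongr with i hi
            exact abs_add_le _ _
  -- L^1 part
  have hT : (∑ x ∈ s, |u x N|) ≤ (∑ x ∈ s, |u x 0|) := by
    set T : ℕ → ℝ := fun y => ∑ x ∈ s, |u x y| with hTdef
    have hTb : ∀ y, T y ≤ s.card * B := by
      intro y
      calc T y ≤ ∑ _x ∈ s, B := Finset.sum_le_sum (fun x _ => hB x y)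
        _ = s.card * B := by rw [Finset.sum_const, nsmul_eq_mul]
    have hTc : ∀ y, 2 * T (y+1) ≤ T (y+2) + T y := by
      intro y
      have hsum : ∑ x ∈ s, 2 * (d:ℝ) * |u x (y+1)| ≤
          ∑ x ∈ s, ((∑ i, (|u (x + Pi.single i 1) (y+1)| +
            |u (x - Pi.single i 1) (y+1)|)) + |u x (y+2)| + |u x y|) :=
        Finset.sum_le_sum (fun x _ => hptw x y)
      have e1 : ∑ x ∈ s, ((∑ i, (|u (x + Pi.single i 1) (y+1)| +
            |u (x - Pi.single i 1) (y+1)|)) + |u x (y+2)| + |u x y|)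
          = (∑ x ∈ s, ∑ i, (|u (x + Pi.single i 1) (y+1)| +
            |u (x - Pi.single i 1) (y+1)|)) + T (y+2) + T y := by
        rw [← Finset.sum_add_distrib, ← Finset.sum_add_distrib]
      have e2 : (∑ x ∈ s, ∑ i, (|u (x + Pi.single i 1) (y+1)| +
            |u (x - Pi.single i 1) (y+1)|)) = 2 * ((d-1:ℕ):ℝ) * T (y+1) := by
        rw [Finset.sum_comm]
        have hterm : ∀ i : Fin (d-1), (∑ x ∈ s, (|u (x + Pi.single i 1) (y+1)| +
            |u (x - Pi.single i 1) (y+1)|)) = 2 * T (y+1) := by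
          intro i
          rw [Finset.sum_add_distrib]
          rw [hs] at *
          rw [sum_shiftS hp hL i (y+1), sum_shiftP hp hL i (y+1)]
          ring
        rw [Finset.sum_congr rfl (fun i _ => hterm i), Finset.sum_const,
          Finset.card_univ, Fintype.card_fin, nsmul_eq_mul]
        ring
      have e3 : ∑ x ∈ s, 2 * (d:ℝ) * |u x (y+1)| = 2 * (d:ℝ) * T (y+1) := by
        rw [← Finset.mul_sum]
      rw [e3, e1, e2] at hsum
      have e4 : 2 * (d:ℝ) * T (y+1) = 2 * ((d-1:ℕ):ℝ) * T (y+1) + 2 * T (y+1) := by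
        rw [hdm]; ring
      linarith
    exact convex_bdd T (s.card * B) hTb hTc N
  refine ⟨hT, ?_⟩
  -- L^infty part
  set S : ℕ → ℝ := fun y => s.sup' hne (fun x => |u x y|) with hSdef
  have hS0 : ∀ y, 0 ≤ S y := by
    intro y
    obtain ⟨x0, hx0⟩ := hne
    exact le_trans (abs_nonneg (u x0 y)) (Finset.le_sup' (fun x => |u x y|) hx0)
  have hSb : ∀ y, S y ≤ B := fun y => Finset.sup'_le _ _ (fun x _ => hB x y)
  have hSc : ∀ y, 2 * S (y+1) ≤ S (y+2) + S y := by
    intro y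
    obtain ⟨xs, hxs, hEq⟩ := Finset.exists_mem_eq_sup' hne (fun x => |u x (y+1)|)
    have hxs' : xs ∈ ILpi (d-1) L := by rwa [hs] at hxs
    have h1 := hptw xs y
    have h2 : (∑ i, (|u (xs + Pi.single i 1) (y+1)| +
        |u (xs - Pi.single i 1) (y+1)|)) ≤ ∑ _i : Fin (d-1), (S (y+1) + S (y+1)) := by
      apply Finset.sum_le_sum
      intro i _
      have hA : |u (xs + Pi.single i 1) (y+1)| ≤ S (y+1) := by
        rw [val_wrapS hp hxs']
        exact Finset.le_sup' (fun x => |u x (y+1)|) (wrapS_mem hL hxs' : _ ∈ s)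
      have hBp : |u (xs - Pi.single i 1) (y+1)| ≤ S (y+1) := by
        rw [val_wrapP hp hxs']
        exact Finset.le_sup' (fun x => |u x (y+1)|) (wrapP_mem hL hxs' : _ ∈ s)
      linarith
    have h3 : (∑ _i : Fin (d-1), (S (y+1) + S (y+1))) = 2 * ((d-1:ℕ):ℝ) * S (y+1) := by
      rw [Finset.sum_const, Finset.card_univ, Fintype.card_fin, nsmul_eq_mul]
      ring
    have h4 : |u xs (y+2)| ≤ S (y+2) := Finset.le_sup' (fun x => |u x (y+2)|) hxs
    have h5 : |u xs y| ≤ S y := Finset.le_sup' (fun x => |u x y|) hxs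
    have h6 : S (y+1) = |u xs (y+1)| := hEq
    rw [h3] at h2
    have e4 : 2 * (d:ℝ) * |u xs (y+1)| =
        2 * ((d-1:ℕ):ℝ) * |u xs (y+1)| + 2 * |u xs (y+1)| := by
      rw [hdm]; ring
    rw [h6]
    have h7 : 2 * ((d-1:ℕ):ℝ) * S (y+1) = 2 * ((d-1:ℕ):ℝ) * |u xs (y+1)| := by
      rw [h6]
    linarith
  have hSN : S N ≤ S 0 := convex_bdd S B hSb hSc N
  -- translate iSup to sup'
  have hBdd : BddAbove (Set.range fun x => ⨆ _ : x ∈ s, |u x 0|) := by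
    refine ⟨max B 0, ?_⟩
    rintro r ⟨x, rfl⟩
    exact Real.iSup_le (fun h => le_max_of_le_left (hB x 0)) (le_max_right _ _)
  have hupper : (⨆ x ∈ s, |u x N|) ≤ S N := by
    apply Real.iSup_le _ (hS0 N)
    intro x
    exact Real.iSup_le (fun hx => Finset.le_sup' (fun x => |u x N|) hx) (hS0 N)
  have hlower : S 0 ≤ ⨆ x ∈ s, |u x 0| := by
    obtain ⟨xs, hxs, hEq⟩ := Finset.exists_mem_eq_sup' hne (fun x => |u x 0|)
    rw [hSdef]
    simp only
    rw [hEq]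
    have hpos : |u xs 0| = ⨆ _ : xs ∈ s, |u xs 0| :=
      (ciSup_pos (f := fun _ : xs ∈ s => |u xs 0|) hxs).symm
    rw [hpos]
    exact le_ciSup hBdd xs
  exact le_trans hupper (le_trans hSN hlower)
end

section
/- Let d ≥ 2 be an integer, L ∈ ℕ, u ∈ H_{d,L}, p ∈ [1,∞], and N ∈ ℕ₀. Then ‖u‖_{L^p(I_L^{d−1} × {N})} ≤ ‖u‖_{L^p(I_L^{d−1} × {0})}; i.e. for every p the L^p norm of a bounded periodic discrete harmonic function on the half space at height N is at most its L^p norm on the bottom layer. -/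
lemma mem_ILpi {m L : ℕ} {x : Fin m → ℤ} :
    x ∈ ILpi m L ↔ ∀ j, (-(L:ℤ) + 1 ≤ x j ∧ x j ≤ L) := by
  simp [ILpi, Finset.mem_Icc, Pi.le_def, forall_and]

def shU (L : ℕ) {m : ℕ} (i : Fin m) (x : Fin m → ℤ) : Fin m → ℤ :=
  Function.update x i (if x i = (L:ℤ) then -(L:ℤ)+1 else x i + 1)

def shD (L : ℕ) {m : ℕ} (i : Fin m) (x : Fin m → ℤ) : Fin m → ℤ :=
  Function.update x i (if x i = -(L:ℤ)+1 then (L:ℤ) else x i - 1)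

lemma shU_mem {m L : ℕ} (hL : 1 ≤ L) (i : Fin m) {x : Fin m → ℤ}
    (hx : x ∈ ILpi m L) : shU L i x ∈ ILpi m L := by
  have hL' : (1:ℤ) ≤ L := by exact_mod_cast hL
  rw [mem_ILpi] at hx ⊢
  intro j
  rcases eq_or_ne j i with rfl | hj
  · simp only [shU, Function.update_self]
    rcases hx j with ⟨h1, h2⟩
    split <;> omega
  · simpa [shU, Function.update_of_ne hj] using hx j

lemma shD_mem {m L : ℕ} (hL : 1 ≤ L) (i : Fin m) {x : Fin m → ℤ}
    (hx : x ∈ ILpi m L) : shD L i x ∈ ILpi m L := by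
  have hL' : (1:ℤ) ≤ L := by exact_mod_cast hL
  rw [mem_ILpi] at hx ⊢
  intro j
  rcases eq_or_ne j i with rfl | hj
  · simp only [shD, Function.update_self]
    rcases hx j with ⟨h1, h2⟩
    split <;> omega
  · simpa [shD, Function.update_of_ne hj] using hx j

lemma shD_shU {m L : ℕ} (i : Fin m) {x : Fin m → ℤ}
    (hx : x ∈ ILpi m L) : shD L i (shU L i x) = x := by
  rw [mem_ILpi] at hx
  funext j
  rcases eq_or_ne j i with rfl | hj
  · rcases hx j with ⟨h1, h2⟩
    simp only [shD, shU, Function.update_self]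
    split
    · split <;> omega
    · split <;> omega
  · simp [shD, shU, Function.update_of_ne hj]

lemma shU_shD {m L : ℕ} (i : Fin m) {x : Fin m → ℤ}
    (hx : x ∈ ILpi m L) : shU L i (shD L i x) = x := by
  rw [mem_ILpi] at hx
  funext j
  rcases eq_or_ne j i with rfl | hj
  · rcases hx j with ⟨h1, h2⟩
    simp only [shD, shU, Function.update_self]
    split
    · split <;> omega
    · split <;> omega
  · simp [shD, shU, Function.update_of_ne hj]

lemma shU_val {m L : ℕ} (f : (Fin m → ℤ) → ℝ)
    (hf : ∀ x (i : Fin m), f (x + (2*L) • Pi.single i 1) = f x)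
    (i : Fin m) (x : Fin m → ℤ) :
    f (x + Pi.single i 1) = f (shU L i x) := by
  by_cases h : x i = (L:ℤ)
  · have key : shU L i x + (2*L) • Pi.single i 1 = x + Pi.single i 1 := by
      funext j
      rcases eq_or_ne j i with rfl | hj
      · simp [shU, Function.update_self, h, Pi.single_apply, nsmul_eq_mul]
        push_cast; ring
      · simp [shU, Function.update_of_ne hj, Pi.single_apply, hj]
    rw [← key, hf]
  · have key : shU L i x = x + Pi.single i 1 := by
      funext j
      rcases eq_or_ne j i with rfl | hj
      · simp [shU, Function.update_self, h, Pi.single_apply]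
      · simp [shU, Function.update_of_ne hj, Pi.single_apply, hj]
    rw [key]

lemma shD_val {m L : ℕ} (f : (Fin m → ℤ) → ℝ)
    (hf : ∀ x (i : Fin m), f (x + (2*L) • Pi.single i 1) = f x)
    (i : Fin m) (x : Fin m → ℤ) :
    f (x - Pi.single i 1) = f (shD L i x) := by
  by_cases h : x i = -(L:ℤ)+1
  · have key : shD L i x = (x - Pi.single i 1) + (2*L) • Pi.single i 1 := by
      funext j
      rcases eq_or_ne j i with rfl | hj
      · simp [shD, Function.update_self, h, Pi.single_apply, nsmul_eq_mul]
        push_cast; ring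
      · simp [shD, Function.update_of_ne hj, Pi.single_apply, hj]
    rw [key, hf]
  · have key : shD L i x = x - Pi.single i 1 := by
      funext j
      rcases eq_or_ne j i with rfl | hj
      · simp [shD, Function.update_self, h, Pi.single_apply]
      · simp [shD, Function.update_of_ne hj, Pi.single_apply, hj]
    rw [key]

lemma sum_shiftU {m L : ℕ} (hL : 1 ≤ L) (f : (Fin m → ℤ) → ℝ)
    (hf : ∀ x (i : Fin m), f (x + (2*L) • Pi.single i 1) = f x) (i : Fin m) :
    ∑ x ∈ ILpi m L, f (x + Pi.single i 1) = ∑ x ∈ ILpi m L, f x := by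
  refine Finset.sum_nbij' (shU L i) (shD L i) (fun x hx => shU_mem hL i hx)
    (fun x hx => shD_mem hL i hx) (fun x hx => shD_shU i hx)
    (fun x hx => shU_shD i hx) (fun x hx => shU_val f hf i x)

lemma sum_shiftD {m L : ℕ} (hL : 1 ≤ L) (f : (Fin m → ℤ) → ℝ)
    (hf : ∀ x (i : Fin m), f (x + (2*L) • Pi.single i 1) = f x) (i : Fin m) :
    ∑ x ∈ ILpi m L, f (x - Pi.single i 1) = ∑ x ∈ ILpi m L, f x := by
  refine Finset.sum_nbij' (shD L i) (shU L i) (fun x hx => shD_mem hL i hx)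
    (fun x hx => shU_mem hL i hx) (fun x hx => shU_shD i hx)
    (fun x hx => shD_shU i hx) (fun x hx => shD_val f hf i x)

lemma convex_bdd_dec (a : ℕ → ℝ) (C : ℝ) (hb : ∀ y, a y ≤ C)
    (hconv : ∀ y, 2 * a (y+1) ≤ a y + a (y+2)) (N : ℕ) : a N ≤ a 0 := by
  have diff : ∀ y, a (y+1) - a y ≤ a (y+2) - a (y+1) := fun y => by linarith [hconv y]
  have nonpos : ∀ y, a (y+1) - a y ≤ 0 := by
    intro y
    by_contra h
    push_neg at h
    have diffm : ∀ k, a (y+1) - a y ≤ a (y+k+1) - a (y+k) := by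
      intro k
      induction k with
      | zero => exact le_rfl
      | succ k ih =>
        calc a (y+1) - a y ≤ a (y+k+1) - a (y+k) := ih
          _ ≤ a (y+k+2) - a (y+k+1) := diff _
          _ = a (y+(k+1)+1) - a (y+(k+1)) := by ring_nf
    have grow : ∀ k : ℕ, a y + k * (a (y+1) - a y) ≤ a (y+k) := by
      intro k
      induction k with
      | zero => simp
      | succ k ih =>
        have := diffm k
        push_cast
        calc a y + ((k:ℝ)+1) * (a (y+1) - a y)
            = (a y + k * (a (y+1) - a y)) + (a (y+1) - a y) := by ring
          _ ≤ a (y+k) + (a (y+k+1) - a (y+k)) := by linarith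
          _ = a (y+(k+1)) := by ring_nf
    obtain ⟨k, hk⟩ := exists_nat_gt ((C - a y) / (a (y+1) - a y))
    have h1 : (C - a y) < k * (a (y+1) - a y) := by
      rw [div_lt_iff₀ h] at hk; linarith
    have := grow k
    have := hb (y+k)
    linarith
  induction N with
  | zero => exact le_rfl
  | succ n ih => linarith [nonpos n]


lemma jensen_aux {ι : Type} [Fintype ι] (n : ℕ) (hn : Fintype.card ι = n) (hn0 : 0 < n)
    (t : ι → ℝ) (ht : ∀ k, 0 ≤ t k) (v p : ℝ) (hp : 1 ≤ p)
    (hv : |v| * n ≤ ∑ k, t k) :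
    |v| ^ p * n ≤ ∑ k, t k ^ p := by
  have hn' : (0:ℝ) < n := by exact_mod_cast hn0
  have h1 : |v| ≤ ∑ k, (1/(n:ℝ)) * t k := by
    rw [← Finset.mul_sum]
    rw [← le_div_iff₀ hn'] at hv
    calc |v| ≤ (∑ k, t k) / n := hv
      _ = 1/(n:ℝ) * ∑ k, t k := by ring
  have h2 : |v| ^ p ≤ (∑ k, (1/(n:ℝ)) * t k) ^ p :=
    Real.rpow_le_rpow (abs_nonneg v) h1 (by linarith)
  have h3 := Real.rpow_arith_mean_le_arith_mean_rpow Finset.univ (fun _ => 1/(n:ℝ)) t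
    (fun i _ => by positivity) (by simp [hn]; field_simp) (fun k _ => ht k) hp
  have h4 : |v| ^ p ≤ ∑ k, (1/(n:ℝ)) * t k ^ p := le_trans h2 h3
  calc |v| ^ p * n ≤ (∑ k, (1/(n:ℝ)) * t k ^ p) * n := by
        exact mul_le_mul_of_nonneg_right h4 (le_of_lt hn')
    _ = ∑ k, t k ^ p := by
        rw [Finset.sum_mul]
        refine Finset.sum_congr rfl fun k _ => ?_
        field_simp

/-- For every `p ∈ [1,∞)` (sum form) and for `p = ∞` (sup form), the `L^p`
norm of `u` on the layer at height `N` is at most its `L^p` norm on the bottom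
layer. -/
theorem halfspace_Lp_contraction
    (d L : ℕ) (hd : 2 ≤ d) (hL : 1 ≤ L)
    (u : (Fin (d-1) → ℤ) → ℕ → ℝ) (hu : HalfHarm d L u) (N : ℕ) :
    (∀ p : ℝ, 1 ≤ p →
      (∑ x ∈ ILpi (d-1) L, |u x N| ^ p) ^ (1/p)
        ≤ (∑ x ∈ ILpi (d-1) L, |u x 0| ^ p) ^ (1/p)) ∧
    (⨆ x ∈ ILpi (d-1) L, |u x N|) ≤ (⨆ x ∈ ILpi (d-1) L, |u x 0|) := by
  obtain ⟨⟨B, hB⟩, hper, hharm⟩ := hu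
  have hne : (ILpi (d-1) L).Nonempty := by
    refine ⟨fun _ => (L:ℤ), ?_⟩
    rw [mem_ILpi]
    intro j
    exact ⟨by omega, le_rfl⟩
  set B' : ℝ := max B 0 with hB'
  have h0B' : 0 ≤ B' := le_max_right _ _
  have hB'' : ∀ x y, |u x y| ≤ B' := fun x y => le_trans (hB x y) (le_max_left _ _)
  -- pointwise triangle inequality from harmonicity
  have habs : ∀ (x : Fin (d-1) → ℤ) (y : ℕ), |u x (y+1)| * (2*(d:ℝ)) ≤
      (∑ i, (|u (x + Pi.single i 1) (y+1)| + |u (x - Pi.single i 1) (y+1)|))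
        + |u x (y+2)| + |u x y| := by
    intro x y
    have h := hharm x y
    have h2 : |u x (y+1)| * (2*(d:ℝ)) =
        |(∑ i, (u (x + Pi.single i 1) (y+1) + u (x - Pi.single i 1) (y+1)))
          + u x (y+2) + u x y| := by
      rw [h, abs_mul, abs_of_nonneg (by positivity : (0:ℝ) ≤ 2*(d:ℝ))]
      ring
    rw [h2]
    calc |(∑ i, (u (x + Pi.single i 1) (y+1) + u (x - Pi.single i 1) (y+1)))
          + u x (y+2) + u x y|
        ≤ |∑ i, (u (x + Pi.single i 1) (y+1) + u (x - Pi.single i 1) (y+1))|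
          + |u x (y+2)| + |u x y| := abs_add_three _ _ _
      _ ≤ (∑ i, (|u (x + Pi.single i 1) (y+1)| + |u (x - Pi.single i 1) (y+1)|))
          + |u x (y+2)| + |u x y| := by
          gcongr
          exact le_trans (Finset.abs_sum_le_sum_abs _ _)
            (Finset.sum_le_sum fun i _ => abs_add_le _ _)
  have hcard : Fintype.card ((Fin (d-1) ⊕ Fin (d-1)) ⊕ Fin 2) = 2*d := by
    simp; omega
  -- pointwise Jensen
  have hjen : ∀ (p : ℝ), 1 ≤ p → ∀ (x : Fin (d-1) → ℤ) (y : ℕ),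
      |u x (y+1)| ^ p * (2*(d:ℝ)) ≤
      (∑ i, |u (x + Pi.single i 1) (y+1)| ^ p)
        + (∑ i, |u (x - Pi.single i 1) (y+1)| ^ p)
        + |u x (y+2)| ^ p + |u x y| ^ p := by
    intro p hp x y
    set t : (Fin (d-1) ⊕ Fin (d-1)) ⊕ Fin 2 → ℝ :=
      Sum.elim (Sum.elim (fun i => |u (x + Pi.single i 1) (y+1)|)
        (fun i => |u (x - Pi.single i 1) (y+1)|))
        (fun b => if b = 0 then |u x (y+2)| else |u x y|) with ht
    have hsum : ∑ k, t k =
        (∑ i, |u (x + Pi.single i 1) (y+1)|) + (∑ i, |u (x - Pi.single i 1) (y+1)|)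
          + |u x (y+2)| + |u x y| := by
      simp [ht, Fintype.sum_sum_type, Fin.sum_univ_two]
      ring
    have hsump : ∑ k, t k ^ p =
        (∑ i, |u (x + Pi.single i 1) (y+1)| ^ p)
          + (∑ i, |u (x - Pi.single i 1) (y+1)| ^ p)
          + |u x (y+2)| ^ p + |u x y| ^ p := by
      simp [ht, Fintype.sum_sum_type, Fin.sum_univ_two]
      ring
    have htn : ∀ k, 0 ≤ t k := by
      rintro ((i | i) | b) <;> simp [ht] <;> split <;> simp [abs_nonneg]
    have hv : |u x (y+1)| * ((2*d : ℕ) : ℝ) ≤ ∑ k, t k := by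
      rw [hsum]
      push_cast
      calc |u x (y+1)| * (2*(d:ℝ))
          ≤ (∑ i, (|u (x + Pi.single i 1) (y+1)| + |u (x - Pi.single i 1) (y+1)|))
            + |u x (y+2)| + |u x y| := habs x y
        _ = _ := by rw [Finset.sum_add_distrib]
    have := jensen_aux (2*d) hcard (by omega) t htn (u x (y+1)) p hp hv
    rw [hsump] at this
    push_cast at this
    linarith
  have hd1 : ((d-1:ℕ):ℝ) = (d:ℝ) - 1 := by
    have : 1 ≤ d := by omega
    push_cast [Nat.cast_sub this]
    ring
  constructor
  · intro p hp
    have hp0 : 0 ≤ p := by linarith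
    have hperiod : ∀ y : ℕ, ∀ (x : Fin (d-1) → ℤ) (i : Fin (d-1)),
        (fun z => |u z y| ^ p) (x + (2*L) • Pi.single i 1) = (fun z => |u z y| ^ p) x := by
      intro y x i
      show |u (x + (2*L) • Pi.single i 1) y| ^ p = |u x y| ^ p
      rw [hper]
    set S : ℕ → ℝ := fun y => ∑ x ∈ ILpi (d-1) L, |u x y| ^ p with hS
    have hconv : ∀ y, 2 * S (y+1) ≤ S y + S (y+2) := by
      intro y
      have hsum := Finset.sum_le_sum (fun x (_ : x ∈ ILpi (d-1) L) => hjen p hp x y)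
      rw [← Finset.sum_mul, Finset.sum_add_distrib, Finset.sum_add_distrib,
        Finset.sum_add_distrib] at hsum
      have e1 : ∑ x ∈ ILpi (d-1) L, ∑ i, |u (x + Pi.single i 1) (y+1)| ^ p
          = ((d-1:ℕ):ℝ) * S (y+1) :=
        calc ∑ x ∈ ILpi (d-1) L, ∑ i, |u (x + Pi.single i 1) (y+1)| ^ p
            = ∑ i, ∑ x ∈ ILpi (d-1) L, |u (x + Pi.single i 1) (y+1)| ^ p :=
              Finset.sum_comm
          _ = ∑ _i : Fin (d-1), S (y+1) := Finset.sum_congr rfl fun i _ =>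
              sum_shiftU hL (fun z => |u z (y+1)| ^ p) (hperiod (y+1)) i
          _ = ((d-1:ℕ):ℝ) * S (y+1) := by
              rw [Finset.sum_const, nsmul_eq_mul]
              simp [Finset.card_univ]
      have e2 : ∑ x ∈ ILpi (d-1) L, ∑ i, |u (x - Pi.single i 1) (y+1)| ^ p
          = ((d-1:ℕ):ℝ) * S (y+1) :=
        calc ∑ x ∈ ILpi (d-1) L, ∑ i, |u (x - Pi.single i 1) (y+1)| ^ p
            = ∑ i, ∑ x ∈ ILpi (d-1) L, |u (x - Pi.single i 1) (y+1)| ^ p :=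
              Finset.sum_comm
          _ = ∑ _i : Fin (d-1), S (y+1) := Finset.sum_congr rfl fun i _ =>
              sum_shiftD hL (fun z => |u z (y+1)| ^ p) (hperiod (y+1)) i
          _ = ((d-1:ℕ):ℝ) * S (y+1) := by
              rw [Finset.sum_const, nsmul_eq_mul]
              simp [Finset.card_univ]
      rw [e1, e2, hd1] at hsum
      have hSdef : (∑ x ∈ ILpi (d-1) L, |u x (y+1)| ^ p) = S (y+1) := rfl
      rw [hSdef] at hsum
      have hexp : S (y+1) * (2*(d:ℝ)) - (((d:ℝ)-1) * S (y+1) + ((d:ℝ)-1) * S (y+1))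
          = 2 * S (y+1) := by ring
      have hS2 : (∑ x ∈ ILpi (d-1) L, |u x (y+2)| ^ p) = S (y+2) := rfl
      have hS0 : (∑ x ∈ ILpi (d-1) L, |u x y| ^ p) = S y := rfl
      rw [hS2, hS0] at hsum
      nlinarith [hsum, hexp]
    have hbd : ∀ y, S y ≤ ((ILpi (d-1) L).card : ℝ) * B' ^ p := by
      intro y
      calc S y ≤ ∑ _x ∈ ILpi (d-1) L, B' ^ p :=
            Finset.sum_le_sum fun x _ =>
              Real.rpow_le_rpow (abs_nonneg _) (hB'' x y) hp0
        _ = _ := by rw [Finset.sum_const, nsmul_eq_mul]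
    have hSN := convex_bdd_dec S _ hbd hconv N
    exact Real.rpow_le_rpow
      (Finset.sum_nonneg fun x _ => Real.rpow_nonneg (abs_nonneg _) p) hSN
      (one_div_nonneg.mpr (by linarith))
  · set M : ℕ → ℝ := fun y => (ILpi (d-1) L).sup' hne (fun x => |u x y|) with hM
    have hMle : ∀ (y : ℕ) x, x ∈ ILpi (d-1) L → |u x y| ≤ M y :=
      fun y x hx => Finset.le_sup' (fun x => |u x y|) hx
    have hM0 : ∀ y, 0 ≤ M y := by
      intro y
      obtain ⟨c, hc⟩ := hne
      exact le_trans (abs_nonneg (u c y)) (hMle y c hc)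
    have hconv : ∀ y, 2 * M (y+1) ≤ M y + M (y+2) := by
      intro y
      obtain ⟨z, hz, hzeq⟩ := Finset.exists_mem_eq_sup' hne (fun x => |u x (y+1)|)
      have h1 := habs z y
      have h2 : ∀ i : Fin (d-1), |u (z + Pi.single i 1) (y+1)| ≤ M (y+1) := by
        intro i
        have hv := shU_val (L := L) (fun w => |u w (y+1)|) (fun w i' => by
          show |u (w + (2*L) • Pi.single i' 1) (y+1)| = |u w (y+1)|
          rw [hper]) i z
        rw [hv]
        exact hMle (y+1) _ (shU_mem hL i hz)
      have h3 : ∀ i : Fin (d-1), |u (z - Pi.single i 1) (y+1)| ≤ M (y+1) := by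
        intro i
        have hv := shD_val (L := L) (fun w => |u w (y+1)|) (fun w i' => by
          show |u (w + (2*L) • Pi.single i' 1) (y+1)| = |u w (y+1)|
          rw [hper]) i z
        rw [hv]
        exact hMle (y+1) _ (shD_mem hL i hz)
      have hsum : (∑ i, (|u (z + Pi.single i 1) (y+1)| + |u (z - Pi.single i 1) (y+1)|))
          ≤ ((d-1:ℕ):ℝ) * (2 * M (y+1)) := by
        calc (∑ i, (|u (z + Pi.single i 1) (y+1)| + |u (z - Pi.single i 1) (y+1)|))
            ≤ ∑ _i : Fin (d-1), (M (y+1) + M (y+1)) :=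
              Finset.sum_le_sum fun i _ => add_le_add (h2 i) (h3 i)
          _ = ((d-1:ℕ):ℝ) * (2 * M (y+1)) := by
              rw [Finset.sum_const, nsmul_eq_mul, Finset.card_univ, Fintype.card_fin]
              ring
      have hza : |u z (y+1)| = M (y+1) := hzeq.symm
      have h4 := hMle (y+2) z hz
      have h5 := hMle y z hz
      rw [hza] at h1
      rw [hd1] at hsum
      nlinarith [h1, hsum, h4, h5]
    have hbd : ∀ y, M y ≤ B' := fun y => Finset.sup'_le _ _ (fun x _ => hB'' x y)
    have hMN := convex_bdd_dec M B' hbd hconv N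
    have h1 : (⨆ x ∈ ILpi (d-1) L, |u x N|) ≤ M N := by
      refine ciSup_le fun x => ?_
      show (⨆ _ : x ∈ ILpi (d-1) L, |u x N|) ≤ M N
      by_cases hx : x ∈ ILpi (d-1) L
      · rw [ciSup_pos hx]
        exact hMle N x hx
      · haveI : IsEmpty (x ∈ ILpi (d-1) L) := ⟨hx⟩
        rw [Real.iSup_of_isEmpty]
        exact hM0 N
    have hbdd : BddAbove (Set.range fun x => ⨆ _ : x ∈ ILpi (d-1) L, |u x 0|) := by
      refine ⟨B', ?_⟩
      rintro _ ⟨x, rfl⟩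
      show (⨆ _ : x ∈ ILpi (d-1) L, |u x 0|) ≤ B'
      by_cases hx : x ∈ ILpi (d-1) L
      · rw [ciSup_pos hx]
        exact hB'' x 0
      · haveI : IsEmpty (x ∈ ILpi (d-1) L) := ⟨hx⟩
        rw [Real.iSup_of_isEmpty]
        exact h0B'
    have h2 : M 0 ≤ ⨆ x ∈ ILpi (d-1) L, |u x 0| := by
      obtain ⟨z, hz, hzeq⟩ := Finset.exists_mem_eq_sup' hne (fun x => |u x 0|)
      calc M 0 = |u z 0| := hzeq
        _ = ⨆ _ : z ∈ ILpi (d-1) L, |u z 0| :=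
            (ciSup_pos (f := fun _ : z ∈ ILpi (d-1) L => |u z 0|) hz).symm
        _ ≤ _ := le_ciSup hbdd z
    linarith [h1, hMN, h2]
end
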